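/- Let L ≥ 1, let R_1 ≥ R_2 ≥ … ≥ R_L ≥ 0, and let p, q be probability vectors on {1,…,L} with Σ_{l=1}^m q_l ≥ Σ_{l=1}^m p_l for every m. For u ≥ 0 let F_p(u) := { φ ∈ [0,1]^L : Σ_l p_l φ_l R_l = u }. If F_p(u) is nonempty, then F_q(u) is nonempty, and the minimum of Σ_l q_l φ_l over F_q(u) is at most the minimum of Σ_l p_l φ_l over F_p(u); i.e., under the stochastically dominating distribution q the throughput u can be achieved using no more total time than under p. -/

import Mathlib

open Finset

/-- For a probability vector `μ` over the `L` channel states with rates `R`, the set of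
time-sharing vectors `φ ∈ [0,1]^L` achieving throughput exactly `u`. -/
def AchieveSet (L : ℕ) (μ R : Fin L → ℝ) (u : ℝ) : Set (Fin L → ℝ) :=
  {φ | (∀ l, φ l ∈ Set.Icc (0 : ℝ) 1) ∧ ∑ l, μ l * φ l * R l = u}

/-- If the distribution `q` stochastically (prefix-sum) dominates `p` and the rates `R`
are nonincreasing and nonnegative, then any throughput `u` achievable under `p` is also
achievable under `q`, and the minimum total time fraction needed under `q` is at most
the minimum needed under `p`. -/
def fext (L : ℕ) (f : Fin L → ℝ) (n : ℕ) : ℝ := if h : n < L then f ⟨n, h⟩ else 0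

lemma sum_fext (L : ℕ) (f : Fin L → ℝ) : ∑ i ∈ range L, fext L f i = ∑ l, f l := by
  rw [Finset.sum_range]
  exact Finset.sum_congr rfl fun l _ => by simp [fext, l.isLt]

lemma sum_Iic_fext (L : ℕ) (f : Fin L → ℝ) (m : Fin L) :
    ∑ l ∈ Finset.Iic m, f l = ∑ i ∈ range (m.1+1), fext L f i := by
  rw [Finset.sum_range]
  refine Finset.sum_bij' (fun l hl => (⟨l.1, by
      have := Finset.mem_Iic.mp hl; rw [Fin.le_def] at this; omega⟩ : Fin (m.1+1)))
    (fun i _ => (⟨i.1, by have := i.isLt; have := m.isLt; omega⟩ : Fin L)) ?_ ?_ ?_ ?_ ?_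
  · intro a ha; simp
  · intro a _; simp [Finset.mem_Iic, Fin.le_def, Nat.lt_succ_iff.mp a.isLt]
  · intro a ha; rfl
  · intro a ha; rfl
  · intro a ha; simp [fext]

lemma abel_sum (L : ℕ) (F Rn : ℕ → ℝ) (hF0 : F 0 = 0) (hRL : Rn L = 0) :
    ∑ n ∈ range L, (F (n+1) - F n) * Rn n = ∑ n ∈ range L, F (n+1) * (Rn n - Rn (n+1)) := by
  have e1 := Finset.sum_range_succ' (fun n => F n * Rn n) L
  have e2 := Finset.sum_range_succ (fun n => F n * Rn n) L
  simp only [sub_mul, mul_sub, Finset.sum_sub_distrib]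
  have : ∑ n ∈ range L, F (n+1) * Rn (n+1) = ∑ n ∈ range L, F n * Rn n := by
    rw [hF0] at e1; rw [hRL] at e2; linarith
  linarith

lemma min_shift (x d S : ℝ) (hd : 0 ≤ d) :
    min x S ≤ min (x+d) S ∧ min (x+d) S ≤ min x S + d := by
  rcases le_total x S with h | h
  · exact ⟨min_le_min (by linarith) le_rfl,
      le_trans (min_le_left _ _) (by rw [min_eq_left h])⟩
  · rw [min_eq_right h, min_eq_right (by linarith)]
    exact ⟨le_rfl, by linarith⟩

lemma key (L : ℕ)
    (R : Fin L → ℝ) (hR : Antitone R) (hRnn : ∀ l, 0 ≤ R l)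
    (p q : Fin L → ℝ) (hp : ∀ l, 0 ≤ p l) (hq : ∀ l, 0 ≤ q l)
    (hp1 : ∑ l, p l = 1) (hq1 : ∑ l, q l = 1)
    (hdom : ∀ m : Fin L, ∑ l ∈ Finset.Iic m, p l ≤ ∑ l ∈ Finset.Iic m, q l)
    (u : ℝ) (hu : 0 ≤ u) (φ : Fin L → ℝ) (hφ : φ ∈ AchieveSet L p R u) :
    ∃ ψ ∈ AchieveSet L q R u, ∑ l, q l * ψ l ≤ ∑ l, p l * φ l := by
  obtain ⟨hφm, hφu⟩ := hφ
  set a : Fin L → ℝ := fun l => p l * φ l with ha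
  have ha0 : ∀ l, 0 ≤ a l := fun l => mul_nonneg (hp l) (hφm l).1
  have hap : ∀ l, a l ≤ p l := fun l => by
    have := (hφm l).2; have := hp l; simpa [ha] using mul_le_of_le_one_right ‹0 ≤ p l› ‹φ l ≤ 1›
  set S : ℝ := ∑ l, p l * φ l with hSdef
  have hS0 : 0 ≤ S := Finset.sum_nonneg fun l _ => ha0 l
  have hS1 : S ≤ 1 := by
    rw [hSdef, ← hp1]; exact Finset.sum_le_sum fun l _ => hap l
  set An : ℕ → ℝ := fun n => ∑ i ∈ range n, fext L a i with hAn
  set Pn : ℕ → ℝ := fun n => ∑ i ∈ range n, fext L p i with hPn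
  set Qn : ℕ → ℝ := fun n => ∑ i ∈ range n, fext L q i with hQn
  set Bn : ℕ → ℝ := fun n => min (Qn n) S with hBn
  have hextq0 : ∀ n, 0 ≤ fext L q n := fun n => by
    unfold fext; split <;> [exact hq _; exact le_rfl]
  have hexta0 : ∀ n, 0 ≤ fext L a n := fun n => by
    unfold fext; split <;> [exact ha0 _; exact le_rfl]
  have hQL : Qn L = 1 := by rw [hQn]; simp only; rw [sum_fext]; exact hq1
  have hAL : An L = S := by rw [hAn]; simp only; rw [sum_fext]
  have hAmono : Monotone An :=
    monotone_nat_of_le_succ fun n => by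
      simp only [hAn, Finset.sum_range_succ]; linarith [hexta0 n]
  have hAQle : ∀ n, n ≤ L → An n ≤ Qn n := by
    intro n hn
    have h1 : An n ≤ Pn n := Finset.sum_le_sum fun i _ => by
      unfold fext; split <;> [exact hap _; exact le_rfl]
    have h2 : Pn n ≤ Qn n := by
      rcases n with _ | m
      · simp [hPn, hQn]
      · have hm : m < L := hn
        have := hdom ⟨m, hm⟩
        rwa [sum_Iic_fext, sum_Iic_fext] at this
    linarith
  set Rn : ℕ → ℝ := fext L R with hRndef
  have hRn0 : ∀ n, 0 ≤ Rn n := fun n => by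
    rw [hRndef]; unfold fext; split <;> [exact hRnn _; exact le_rfl]
  have hRnanti : ∀ n, Rn (n+1) ≤ Rn n := by
    intro n
    rw [hRndef]; unfold fext
    split
    · next h1 =>
      have hn : n < L := by omega
      rw [dif_pos hn]
      exact hR (show (⟨n, hn⟩ : Fin L) ≤ ⟨n+1, h1⟩ by simp [Fin.le_def])
    · split <;> [exact hRnn _; exact le_rfl]
  have hRnL : Rn L = 0 := by rw [hRndef]; unfold fext; rw [dif_neg (lt_irrefl L)]
  -- properties of b
  have hQsucc : ∀ l : Fin L, Qn (l.1+1) = Qn l.1 + q l := by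
    intro l
    rw [hQn]; simp only [Finset.sum_range_succ]
    congr 1; unfold fext; rw [dif_pos l.isLt]
  have hb0 : ∀ l : Fin L, 0 ≤ Bn (l.1+1) - Bn l.1 := by
    intro l
    have := (min_shift (Qn l.1) (q l) S (hq l)).1
    rw [hBn]; simp only [hQsucc l]; linarith
  have hbq : ∀ l : Fin L, Bn (l.1+1) - Bn l.1 ≤ q l := by
    intro l
    have := (min_shift (Qn l.1) (q l) S (hq l)).2
    rw [hBn]; simp only [hQsucc l]; linarith
  have hB0 : Bn 0 = 0 := by
    rw [hBn]; simp only [hQn, Finset.sum_range_zero]; exact min_eq_left hS0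
  have hBL : Bn L = S := by rw [hBn]; simp only [hQL]; exact min_eq_right hS1
  -- T and u ≤ T
  set T : ℝ := ∑ n ∈ range L, (Bn (n+1) - Bn n) * Rn n with hT
  have huA : u = ∑ n ∈ range L, (An (n+1) - An n) * Rn n := by
    rw [← hφu]
    have : ∀ n ∈ range L, (An (n+1) - An n) * Rn n = fext L (fun l => a l * R l) n := by
      intro n hn
      have hnL : n < L := Finset.mem_range.mp hn
      have : An (n+1) - An n = fext L a n := by
        rw [hAn]; simp only [Finset.sum_range_succ]; ring
      rw [this, hRndef]; unfold fext; rw [dif_pos hnL, dif_pos hnL, dif_pos hnL]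
    rw [Finset.sum_congr rfl this, sum_fext]
  have hAB : ∀ n ∈ range L, An (n+1) ≤ Bn (n+1) := by
    intro n hn
    have hnL : n < L := Finset.mem_range.mp hn
    refine le_min (hAQle (n+1) hnL) ?_
    rw [← hAL]; exact hAmono (by omega)
  have hA0 : An 0 = 0 := by simp [hAn]
  have hTu : u ≤ T := by
    rw [huA, hT, abel_sum L An Rn hA0 hRnL, abel_sum L Bn Rn hB0 hRnL]
    exact Finset.sum_le_sum fun n hn =>
      mul_le_mul_of_nonneg_right (hAB n hn) (by linarith [hRnanti n])
  have hT0 : 0 ≤ T := le_trans hu hTu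
  -- scaling constant
  set c : ℝ := if T = 0 then 0 else u / T with hc
  have hc0 : 0 ≤ c := by
    rw [hc]; split
    · exact le_rfl
    · exact div_nonneg hu hT0
  have hc1 : c ≤ 1 := by
    rw [hc]; split
    · exact zero_le_one
    · next h => exact div_le_one_of_le₀ hTu hT0
  have hcT : c * T = u := by
    rw [hc]; split
    · next h => rw [h] at hTu ⊢; linarith
    · next h => field_simp
  -- the witness
  set ψ : Fin L → ℝ := fun l => if q l = 0 then 0 else c * (Bn (l.1+1) - Bn l.1) / q l with hψ
  have hqψ : ∀ l, q l * ψ l = c * (Bn (l.1+1) - Bn l.1) := by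
    intro l
    rw [hψ]; simp only
    split
    · next h =>
      have : Bn (l.1+1) - Bn l.1 = 0 := le_antisymm (h ▸ hbq l) (hb0 l)
      rw [h, this]; ring
    · next h => field_simp
  have hψmem : ∀ l, ψ l ∈ Set.Icc (0:ℝ) 1 := by
    intro l
    rw [hψ]; simp only
    split
    · exact ⟨le_rfl, zero_le_one⟩
    · next h =>
      have hql : 0 < q l := lt_of_le_of_ne (hq l) (Ne.symm h)
      constructor
      · exact div_nonneg (mul_nonneg hc0 (hb0 l)) hql.le
      · rw [div_le_one hql]
        calc c * (Bn (l.1+1) - Bn l.1) ≤ 1 * (Bn (l.1+1) - Bn l.1) :=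
              mul_le_mul_of_nonneg_right hc1 (hb0 l)
          _ = Bn (l.1+1) - Bn l.1 := one_mul _
          _ ≤ q l := hbq l
  have hsumbR : ∑ l, (Bn (l.1+1) - Bn l.1) * R l = T := by
    rw [hT, ← Fin.sum_univ_eq_sum_range (fun n => (Bn (n+1) - Bn n) * Rn n) L]
    exact Finset.sum_congr rfl fun l _ => by
      congr 1
      rw [hRndef]; unfold fext; rw [dif_pos l.isLt]
  have hsumb : ∑ l : Fin L, (Bn ((l:ℕ)+1) - Bn (l:ℕ)) = S := by
    have e : ∑ l : Fin L, (Bn ((l:ℕ)+1) - Bn (l:ℕ)) = ∑ n ∈ range L, (Bn (n+1) - Bn n) :=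
      Fin.sum_univ_eq_sum_range (fun n => Bn (n+1) - Bn n) L
    rw [e, Finset.sum_range_sub Bn L, hB0, hBL, sub_zero]
  refine ⟨ψ, ⟨hψmem, ?_⟩, ?_⟩
  · calc ∑ l, q l * ψ l * R l = ∑ l, c * ((Bn (l.1+1) - Bn l.1) * R l) := by
          refine Finset.sum_congr rfl fun l _ => ?_
          rw [hqψ l]; ring
      _ = c * ∑ l, (Bn (l.1+1) - Bn l.1) * R l := by rw [Finset.mul_sum]
      _ = u := by rw [hsumbR, hcT]
  · calc ∑ l, q l * ψ l = ∑ l, c * (Bn (l.1+1) - Bn l.1) :=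
          Finset.sum_congr rfl fun l _ => hqψ l
      _ = c * S := by rw [← Finset.mul_sum, hsumb]
      _ ≤ 1 * S := mul_le_mul_of_nonneg_right hc1 hS0
      _ = ∑ l, p l * φ l := by rw [one_mul]

theorem stmt4 (L : ℕ) (hL : 1 ≤ L)
    (R : Fin L → ℝ) (hR : Antitone R) (hRnn : ∀ l, 0 ≤ R l)
    (p q : Fin L → ℝ) (hp : ∀ l, 0 ≤ p l) (hq : ∀ l, 0 ≤ q l)
    (hp1 : ∑ l, p l = 1) (hq1 : ∑ l, q l = 1)
    (hdom : ∀ m : Fin L, ∑ l ∈ Finset.Iic m, p l ≤ ∑ l ∈ Finset.Iic m, q l)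
    (u : ℝ) (hu : 0 ≤ u)
    (hne : (AchieveSet L p R u).Nonempty) :
    (AchieveSet L q R u).Nonempty ∧
      sInf ((fun φ => ∑ l, q l * φ l) '' AchieveSet L q R u) ≤
        sInf ((fun φ => ∑ l, p l * φ l) '' AchieveSet L p R u) := by
  obtain ⟨φ0, hφ0⟩ := id hne
  obtain ⟨ψ0, hψ0, -⟩ := key L R hR hRnn p q hp hq hp1 hq1 hdom u hu φ0 hφ0
  refine ⟨⟨ψ0, hψ0⟩, ?_⟩
  have hbdd : BddBelow ((fun φ => ∑ l, q l * φ l) '' AchieveSet L q R u) := by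
    refine ⟨0, ?_⟩
    rintro x ⟨ψ, hψ, rfl⟩
    exact Finset.sum_nonneg fun l _ => mul_nonneg (hq l) (hψ.1 l).1
  refine le_csInf (Set.Nonempty.image _ hne) ?_
  rintro x ⟨φ', hφ', rfl⟩
  obtain ⟨ψ', hψ', hle⟩ := key L R hR hRnn p q hp hq hp1 hq1 hdom u hu φ' hφ'
  exact le_trans (csInf_le hbdd ⟨ψ', hψ', rfl⟩) hle
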